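/- With OPT and OPT_d defined as the k-sparse maxima of the quadratic forms of A and its rank-d truncation A_d respectively, the ratio OPT_d/OPT is at least 1 − λ_{d+1}/OPT, assuming OPT > 0. -/

import Mathlib

open Matrix BigOperators

lemma stmt4_quad {n : ℕ} (s : Finset (Fin n)) (lam : Fin n → ℝ) (v : Fin n → Fin n → ℝ)
    (x : Fin n → ℝ) :
    x ⬝ᵥ (∑ i ∈ s, lam i • Matrix.vecMulVec (v i) (v i)) *ᵥ x
      = ∑ i ∈ s, lam i * (v i ⬝ᵥ x)^2 := by
  classical
  induction s using Finset.induction with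
  | empty => simp [Matrix.mulVec]
  | insert _ _ h ih =>
    rw [Finset.sum_insert h, Finset.sum_insert h, Matrix.add_mulVec, dotProduct_add, ih,
      Matrix.smul_mulVec, dotProduct_smul]
    congr 1
    simp only [smul_eq_mul]
    congr 1
    simp [Matrix.mulVec, Matrix.vecMulVec_apply, dotProduct, pow_two, Finset.mul_sum,
      Finset.sum_mul, mul_comm, mul_left_comm]

lemma stmt4_bessel {n : ℕ} (v : Fin n → Fin n → ℝ)
    (horth : ∀ i j, v i ⬝ᵥ v j = if i = j then (1:ℝ) else 0) (x : Fin n → ℝ) :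
    ∑ i, (v i ⬝ᵥ x)^2 = ∑ i, x i ^ 2 := by
  classical
  set M : Matrix (Fin n) (Fin n) ℝ := Matrix.of v with hM
  have h1 : M * Mᵀ = 1 := by
    ext i j
    have := horth i j
    simpa [Matrix.mul_apply, Matrix.one_apply, dotProduct, hM] using this
  have h2 : Mᵀ * M = 1 := mul_eq_one_comm.mp h1
  have key : (M *ᵥ x) ⬝ᵥ (M *ᵥ x) = x ⬝ᵥ x := by
    rw [Matrix.dotProduct_mulVec, ← Matrix.vecMul_transpose, Matrix.vecMul_vecMul, h2]
    simp
  have e1 : ∑ i, (v i ⬝ᵥ x)^2 = (M *ᵥ x) ⬝ᵥ (M *ᵥ x) := by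
    simp [Matrix.mulVec, dotProduct, pow_two, hM]
  rw [e1, key]
  simp [dotProduct, pow_two]

/-- With `OPT` and `OPT_d` the `k`-sparse maxima of the quadratic forms of `A`
and of its rank-`d` truncation `A_d`, and `OPT > 0`, we have
`OPT_d / OPT ≥ 1 − λ_{d+1} / OPT`. -/
theorem stmt_4 {n k d : ℕ} (A Ad : Matrix (Fin n) (Fin n) ℝ)
    (lam : Fin n → ℝ) (v : Fin n → (Fin n → ℝ))
    (hPSD : A.PosSemidef)
    (hlam_nonneg : ∀ i, 0 ≤ lam i)
    (hlam_mono : ∀ i j : Fin n, i ≤ j → lam j ≤ lam i)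
    (horth : ∀ i j : Fin n, v i ⬝ᵥ v j = if i = j then (1 : ℝ) else 0)
    (hA : A = ∑ i, lam i • Matrix.vecMulVec (v i) (v i))
    (hAd : Ad = ∑ i ∈ Finset.univ.filter (fun i : Fin n => (i : ℕ) < d),
      lam i • Matrix.vecMulVec (v i) (v i))
    (hk1 : 1 ≤ k) (hkn : k ≤ n) (hdn : d < n)
    (S : Set (Fin n → ℝ))
    (hS : S = {x | (∑ i, x i ^ 2 = 1) ∧ (Function.support x).ncard ≤ k})
    (OPT OPTd : ℝ)
    (hOPT : IsGreatest ((fun x => x ⬝ᵥ A.mulVec x) '' S) OPT)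
    (hOPTd : IsGreatest ((fun x => x ⬝ᵥ Ad.mulVec x) '' S) OPTd)
    (hOPTpos : 0 < OPT) :
    1 - lam ⟨d, hdn⟩ / OPT ≤ OPTd / OPT := by
  classical
  obtain ⟨⟨x, hxS, hxval⟩, _⟩ := hOPT
  have hnorm : ∑ i, x i ^ 2 = 1 := by
    rw [hS] at hxS; exact hxS.1
  have hmemd : x ⬝ᵥ Ad.mulVec x ≤ OPTd := hOPTd.2 ⟨x, hxS, rfl⟩
  have hAx : x ⬝ᵥ A.mulVec x = ∑ i, lam i * (v i ⬝ᵥ x)^2 := by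
    rw [hA]; exact stmt4_quad _ _ _ _
  have hAdx : x ⬝ᵥ Ad.mulVec x
      = ∑ i ∈ Finset.univ.filter (fun i : Fin n => (i : ℕ) < d), lam i * (v i ⬝ᵥ x)^2 := by
    rw [hAd]; exact stmt4_quad _ _ _ _
  set dd : Fin n := ⟨d, hdn⟩
  have hsplit : x ⬝ᵥ A.mulVec x = x ⬝ᵥ Ad.mulVec x
      + ∑ i ∈ Finset.univ.filter (fun i : Fin n => ¬ (i : ℕ) < d), lam i * (v i ⬝ᵥ x)^2 := by
    rw [hAx, hAdx, Finset.sum_filter_add_sum_filter_not]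
  have htail : ∑ i ∈ Finset.univ.filter (fun i : Fin n => ¬ (i : ℕ) < d),
      lam i * (v i ⬝ᵥ x)^2 ≤ lam dd := by
    have h1 : ∑ i ∈ Finset.univ.filter (fun i : Fin n => ¬ (i : ℕ) < d),
        lam i * (v i ⬝ᵥ x)^2
        ≤ ∑ i ∈ Finset.univ.filter (fun i : Fin n => ¬ (i : ℕ) < d),
          lam dd * (v i ⬝ᵥ x)^2 := by
      apply Finset.sum_le_sum
      intro i hi
      have hdi : dd ≤ i := by
        simp only [Finset.mem_filter, not_lt] at hi
        exact hi.2
      have := hlam_mono dd i hdi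
      nlinarith [sq_nonneg (v i ⬝ᵥ x)]
    have h2 : ∑ i ∈ Finset.univ.filter (fun i : Fin n => ¬ (i : ℕ) < d),
        lam dd * (v i ⬝ᵥ x)^2 ≤ ∑ i, lam dd * (v i ⬝ᵥ x)^2 := by
      apply Finset.sum_le_sum_of_subset_of_nonneg (Finset.filter_subset _ _)
      intro i _ _
      exact mul_nonneg (hlam_nonneg dd) (sq_nonneg _)
    have h3 : ∑ i, lam dd * (v i ⬝ᵥ x)^2 = lam dd := by
      rw [← Finset.mul_sum, stmt4_bessel v horth x, hnorm, mul_one]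
    linarith
  have hkey : OPT - lam dd ≤ OPTd := by
    have : OPT = x ⬝ᵥ A.mulVec x := hxval.symm
    linarith [hsplit, htail, hmemd]
  have heq : 1 - lam dd / OPT = (OPT - lam dd) / OPT := by
    field_simp
  rw [heq]
  gcongr
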